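/- Let T and T* be prefix-closed subtrees of the same size N with T ≠ T*, where T* = {i_1,...,i_N} is enumerated in non-increasing score order by best-first expansion. Then there exists a prefix-closed subtree T' of size N with score sum Σρ(T') ≥ Σρ(T) and strictly smaller symmetric difference with T*. -/
import Mathlib


/-- A candidate lattice: a rooted tree with multiplicative path scores, where each
node multiplies its parent's score by a weight in [0,1], and the root has score 1. -/
structure ScoreTree (σ : Type) where
  root : σ
  parent : σ → σ
  depth : σ → ℕ
  weight : σ → ℝ
  score : σ → ℝ
  parent_root : parent root = root
  depth_root : depth root = 0
  depth_node : ∀ i, i ≠ root → depth i = depth (parent i) + 1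
  weight_nonneg : ∀ i, 0 ≤ weight i
  weight_le_one : ∀ i, weight i ≤ 1
  score_root : score root = 1
  score_node : ∀ i, i ≠ root → score i = score (parent i) * weight i

lemma ScoreTree.score_nonneg' {σ : Type} (T : ScoreTree σ) (i : σ) : 0 ≤ T.score i := by
  have key : ∀ d i, T.depth i ≤ d → 0 ≤ T.score i := by
    intro d
    induction d with
    | zero =>
      intro i hi
      by_cases h : i = T.root
      · rw [h, T.score_root]; norm_num
      · rw [T.depth_node i h] at hi; omega
    | succ d ih =>
      intro i hi
      by_cases h : i = T.root
      · rw [h, T.score_root]; norm_num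
      · rw [T.score_node i h]
        have hd := T.depth_node i h
        exact mul_nonneg (ih _ (by omega)) (T.weight_nonneg i)
  exact key (T.depth i) i le_rfl

lemma ScoreTree.score_le_parent' {σ : Type} (T : ScoreTree σ) (i : σ) (h : i ≠ T.root) :
    T.score i ≤ T.score (T.parent i) := by
  rw [T.score_node i h]
  exact mul_le_of_le_one_right (T.score_nonneg' _) (T.weight_le_one i)

lemma ScoreTree.climb {σ : Type} (T : ScoreTree σ) (P : σ → Prop) (hP : P T.root) :
    ∀ j, ¬ P j → ∃ a, ¬ P a ∧ P (T.parent a) ∧ T.score j ≤ T.score a := by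
  have key : ∀ d j, T.depth j ≤ d → ¬ P j →
      ∃ a, ¬ P a ∧ P (T.parent a) ∧ T.score j ≤ T.score a := by
    intro d
    induction d with
    | zero =>
      intro j hj hPj
      have hne : j ≠ T.root := fun h => hPj (h ▸ hP)
      rw [T.depth_node j hne] at hj; omega
    | succ d ih =>
      intro j hj hPj
      have hne : j ≠ T.root := fun h => hPj (h ▸ hP)
      by_cases hp : P (T.parent j)
      · exact ⟨j, hPj, hp, le_rfl⟩
      · have hd := T.depth_node j hne
        obtain ⟨a, h1, h2, h3⟩ := ih (T.parent j) (by omega) hp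
        exact ⟨a, h1, h2, le_trans (T.score_le_parent' j hne) h3⟩
  exact fun j => key (T.depth j) j le_rfl

/-- Exchange step: if S and T* are prefix-closed subtrees of the same size N with
S ≠ T*, where T* consists of the first N nodes of a best-first enumeration, then
there is a prefix-closed subtree T' of size N whose score sum is at least that of S
and whose symmetric difference with T* is strictly smaller than that of S. -/
theorem stmt9 {σ : Type} [DecidableEq σ] (T : ScoreTree σ) (sel : ℕ → σ)
    (hsel0 : sel 0 = T.root)
    (hinj : Function.Injective sel)
    (havail : ∀ n, 0 < n → ∃ k < n, sel k = T.parent (sel n))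
    (hmax : ∀ n, 0 < n → ∀ j, (∀ k < n, sel k ≠ j) → (∃ k < n, sel k = T.parent j) →
      T.score j ≤ T.score (sel n))
    (N : ℕ) (S : Finset σ)
    (hroot : T.root ∈ S) (hclosed : ∀ i ∈ S, T.parent i ∈ S)
    (hcard : S.card = N) (hne : S ≠ (Finset.range N).image sel) :
    ∃ T' : Finset σ, T.root ∈ T' ∧ (∀ i ∈ T', T.parent i ∈ T') ∧ T'.card = N ∧
      ∑ i ∈ S, T.score i ≤ ∑ i ∈ T', T.score i ∧
      ((T' \ (Finset.range N).image sel) ∪ ((Finset.range N).image sel \ T')).card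
        < ((S \ (Finset.range N).image sel) ∪ ((Finset.range N).image sel \ S)).card := by
  set Tstar : Finset σ := (Finset.range N).image sel with hTstar
  have hcardTstar : Tstar.card = N := by
    rw [hTstar, Finset.card_image_of_injective _ hinj, Finset.card_range]
  have hNpos : 0 < N := hcard ▸ Finset.card_pos.2 ⟨T.root, hroot⟩
  have hrootTstar : T.root ∈ Tstar := by
    rw [hTstar]
    exact Finset.mem_image.2 ⟨0, Finset.mem_range.2 hNpos, hsel0⟩
  have hTstarClosed : ∀ i ∈ Tstar, T.parent i ∈ Tstar := by
    intro i hi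
    rw [hTstar, Finset.mem_image] at hi
    obtain ⟨m, hm, rfl⟩ := hi
    rcases Nat.eq_zero_or_pos m with rfl | hm0
    · rw [hsel0, T.parent_root]; exact hrootTstar
    · obtain ⟨k, hk, hke⟩ := havail m hm0
      rw [hTstar]
      exact Finset.mem_image.2 ⟨k, Finset.mem_range.2 (lt_trans hk (Finset.mem_range.1 hm)),
        hke⟩
  -- S \ Tstar and Tstar \ S are nonempty
  have hAne : (S \ Tstar).Nonempty := by
    rw [Finset.sdiff_nonempty]
    intro hsub
    exact hne (Finset.eq_of_subset_of_card_le hsub (by omega))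
  have hBne : (Tstar \ S).Nonempty := by
    rw [Finset.sdiff_nonempty]
    intro hsub
    exact hne (Finset.eq_of_subset_of_card_le hsub (by omega)).symm
  -- choose y of maximal depth in S \ Tstar
  obtain ⟨y, hy, hymax⟩ := Finset.exists_max_image (S \ Tstar) T.depth hAne
  have hyS : y ∈ S := (Finset.mem_sdiff.1 hy).1
  have hyT : y ∉ Tstar := (Finset.mem_sdiff.1 hy).2
  have hyroot : y ≠ T.root := fun h => hyT (h ▸ hrootTstar)
  -- no element of S has parent y
  have hchild : ∀ i ∈ S, T.parent i ≠ y := by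
    intro i hiS hpi
    by_cases hir : i = T.root
    · rw [hir, T.parent_root] at hpi; exact hyroot hpi.symm
    · by_cases hiT : i ∈ Tstar
      · exact hyT (hpi ▸ hTstarClosed i hiT)
      · have := hymax i (Finset.mem_sdiff.2 ⟨hiS, hiT⟩)
        rw [T.depth_node i hir, hpi] at this
        omega
  set S' : Finset σ := S.erase y with hS'
  have hS'closed : ∀ i ∈ S', T.parent i ∈ S' := by
    intro i hi
    have hiS : i ∈ S := Finset.mem_of_mem_erase hi
    exact Finset.mem_erase.2 ⟨hchild i hiS, hclosed i hiS⟩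
  have hrootS' : T.root ∈ S' := Finset.mem_erase.2 ⟨fun h => hyroot h.symm, hroot⟩
  -- pick smallest n with sel n ∉ S'
  obtain ⟨z0, hz0⟩ := hBne
  rw [Finset.mem_sdiff, hTstar, Finset.mem_image] at hz0
  obtain ⟨⟨m, hm, hmz⟩, hz0S⟩ := hz0
  have hwit : sel m ∉ S' := fun h => hz0S (hmz ▸ Finset.mem_of_mem_erase h)
  have hex : ∃ n, sel n ∉ S' := ⟨m, hwit⟩
  set n := Nat.find hex with hn
  have hnspec : sel n ∉ S' := Nat.find_spec hex
  have hnmin : ∀ k < n, sel k ∈ S' := fun k hk =>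
    not_not.1 (Nat.find_min hex hk)
  have hnN : n < N := lt_of_le_of_lt (Nat.find_le hwit) (Finset.mem_range.1 hm)
  have hnpos : 0 < n := by
    rcases Nat.eq_zero_or_pos n with h0 | h
    · exfalso; apply hnspec; rw [h0, hsel0]; exact hrootS'
    · exact h
  set z := sel n with hz
  have hzT : z ∈ Tstar := by
    rw [hTstar]; exact Finset.mem_image.2 ⟨n, Finset.mem_range.2 hnN, rfl⟩
  have hzy : z ≠ y := fun h => hyT (h ▸ hzT)
  have hzS : z ∉ S := fun h => hnspec (Finset.mem_erase.2 ⟨hzy, h⟩)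
  have hzS' : z ∉ S' := hnspec
  refine ⟨insert z S', ?_, ?_, ?_, ?_, ?_⟩
  · exact Finset.mem_insert_of_mem hrootS'
  · intro i hi
    rcases Finset.mem_insert.1 hi with rfl | hiS'
    · obtain ⟨k, hk, hke⟩ := havail n hnpos
      exact Finset.mem_insert_of_mem (hke ▸ hnmin k hk)
    · exact Finset.mem_insert_of_mem (hS'closed i hiS')
  · rw [Finset.card_insert_of_notMem hzS', hS', Finset.card_erase_of_mem hyS]
    omega
  · -- sum comparison
    have hscore : T.score y ≤ T.score z := by
      have hPy : ¬ (∃ k < n, sel k = y) := by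
        rintro ⟨k, hk, hke⟩
        exact (Finset.mem_erase.1 (hke ▸ hnmin k hk)).1 rfl
      obtain ⟨a, ha1, ha2, ha3⟩ := T.climb (fun x => ∃ k < n, sel k = x)
        ⟨0, hnpos, hsel0⟩ y hPy
      have := hmax n hnpos a (fun k hk hke => ha1 ⟨k, hk, hke⟩) ha2
      exact le_trans ha3 this
    have h1 : ∑ i ∈ insert z S', T.score i = T.score z + ∑ i ∈ S', T.score i :=
      Finset.sum_insert hzS'
    have h2 : T.score y + ∑ i ∈ S', T.score i = ∑ i ∈ S, T.score i :=
      Finset.add_sum_erase S T.score hyS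
    linarith
  · -- symmetric difference shrinks
    have hA : insert z S' \ Tstar = (S \ Tstar).erase y := by
      ext x
      simp only [Finset.mem_sdiff, Finset.mem_insert, Finset.mem_erase, hS',
        Finset.mem_erase]
      constructor
      · rintro ⟨rfl | ⟨hxy, hxS⟩, hxT⟩
        · exact absurd hzT hxT
        · exact ⟨hxy, hxS, hxT⟩
      · rintro ⟨hxy, hxS, hxT⟩
        exact ⟨Or.inr ⟨hxy, hxS⟩, hxT⟩
    have hB : Tstar \ insert z S' = (Tstar \ S).erase z := by
      ext x
      simp only [Finset.mem_sdiff, Finset.mem_insert, Finset.mem_erase, hS',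
        not_or]
      constructor
      · rintro ⟨hxT, hxz, hxS'⟩
        exact ⟨hxz, hxT, fun hxS => hxS' ⟨fun h => hyT (h ▸ hxT), hxS⟩⟩
      · rintro ⟨hxz, hxT, hxS⟩
        exact ⟨hxT, hxz, fun h => hxS h.2⟩
    rw [hA, hB]
    have hdisj : Disjoint (S \ Tstar) (Tstar \ S) := disjoint_sdiff_sdiff
    have hcardU : ((S \ Tstar) ∪ (Tstar \ S)).card = (S \ Tstar).card + (Tstar \ S).card :=
      Finset.card_union_of_disjoint hdisj
    have hyA : y ∈ S \ Tstar := hy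
    have hzB : z ∈ Tstar \ S := Finset.mem_sdiff.2 ⟨hzT, hzS⟩
    have h1 : ((S \ Tstar).erase y).card = (S \ Tstar).card - 1 :=
      Finset.card_erase_of_mem hyA
    have h2 : ((Tstar \ S).erase z).card = (Tstar \ S).card - 1 :=
      Finset.card_erase_of_mem hzB
    have h3 := Finset.card_union_le ((S \ Tstar).erase y) ((Tstar \ S).erase z)
    have h4 : 0 < (S \ Tstar).card := Finset.card_pos.2 ⟨y, hyA⟩
    have h5 : 0 < (Tstar \ S).card := Finset.card_pos.2 ⟨z, hzB⟩
    omega
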